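/- Let M be a positive integer and let h, h' be positive integers with h² | M, h'² | M, and h | h'. Then Γ₀^{*,h}(M) ⊆ Γ₀^{*,h'}(M) and G₀^{*,h}(M) ⊆ G₀^{*,h'}(M). -/

import Mathlib

/-- `x ∈ ℤ_(M)`, i.e. `x = a/b` with `a, b ∈ ℤ` and `gcd(b, M) = 1`. -/
def inZM (M : ℕ) (x : ℚ) : Prop :=
  ∃ a b : ℤ, Int.gcd b M = 1 ∧ x = a / b

/-- `Γ₀^{*,h}(M)`: the set of matrices `(1/√e)·(e·p, q/h; M·r/h, e·s)` of determinant `1`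
with `e` a positive integer dividing `M/h²` and `p, q, r, s ∈ ℤ`. -/
def GammaStar (M h : ℕ) : Set (Matrix (Fin 2) (Fin 2) ℝ) :=
  {W | W.det = 1 ∧ ∃ (e : ℕ) (p q r s : ℤ), 0 < e ∧ e ∣ M / h ^ 2 ∧
    W = (Real.sqrt e)⁻¹ • !![(e : ℝ) * p, (q : ℝ) / h; (M : ℝ) * r / h, (e : ℝ) * s]}

/-- `G₀^{*,h}(M)`: the same, but with `p, q, r, s ∈ ℤ_(M)`. -/
def GStar (M h : ℕ) : Set (Matrix (Fin 2) (Fin 2) ℝ) :=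
  {W | W.det = 1 ∧ ∃ (e : ℕ) (p q r s : ℚ), 0 < e ∧ e ∣ M / h ^ 2 ∧
    inZM M p ∧ inZM M q ∧ inZM M r ∧ inZM M s ∧
    W = (Real.sqrt e)⁻¹ • !![(e : ℝ) * (p : ℝ), (q : ℝ) / h; (M : ℝ) * r / h, (e : ℝ) * s]}


lemma master (M h h' e : ℕ) (hM : 0 < M) (hh : 0 < h) (hh' : 0 < h')
    (hhM : h ^ 2 ∣ M) (hh'M : h' ^ 2 ∣ M) (hdvd : h ∣ h') (he : 0 < e)
    (heM : e ∣ M / h ^ 2) (hcop : Nat.Coprime e ((M / h ^ 2) / e)) :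
    ∃ e' c d : ℕ, 0 < e' ∧ 0 < c ∧ 0 < d ∧ e = e' * d ^ 2 ∧ h' = c * d * h ∧
      e' ∣ M / h' ^ 2 := by
  set m : ℕ := (M / h ^ 2) / e with hm
  have hem : e * m = M / h ^ 2 := Nat.mul_div_cancel' heM
  have hMeq : M = h ^ 2 * (e * m) := by
    rw [hem]; exact (Nat.mul_div_cancel' hhM).symm
  have hmpos : 0 < m := by
    rcases Nat.eq_zero_or_pos m with h0 | h0
    · simp [h0] at hMeq; omega
    · exact h0
  obtain ⟨g, hg⟩ := hdvd
  have hgpos : 0 < g := by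
    rcases Nat.eq_zero_or_pos g with h0 | h0
    · simp [h0] at hg; omega
    · exact h0
  -- g^2 ∣ e * m
  have hgem : g ^ 2 ∣ e * m := by
    have : (h * g) ^ 2 ∣ h ^ 2 * (e * m) := hMeq ▸ (hg ▸ hh'M)
    rw [mul_pow] at this
    exact (Nat.mul_dvd_mul_iff_left (pow_pos hh 2)).mp this
  set c : ℕ := Nat.gcd g m with hc
  have hcpos : 0 < c := Nat.gcd_pos_of_pos_left m hgpos
  have hcg : c ∣ g := Nat.gcd_dvd_left g m
  have hcm : c ∣ m := Nat.gcd_dvd_right g m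
  set d : ℕ := g / c with hd
  have hdg : c * d = g := Nat.mul_div_cancel' hcg
  have hdpos : 0 < d := by
    rcases Nat.eq_zero_or_pos d with h0 | h0
    · rw [h0] at hdg; omega
    · exact h0
  set m₁ : ℕ := m / c with hm1
  have hm1e : c * m₁ = m := Nat.mul_div_cancel' hcm
  have hdm1 : Nat.Coprime d m₁ := Nat.coprime_div_gcd_div_gcd hcpos
  -- c² ∣ m
  have hce : Nat.Coprime c e := Nat.Coprime.coprime_dvd_left hcm hcop.symm
  have hc2m : c ^ 2 ∣ m := by
    have h1 : c ^ 2 ∣ e * m := dvd_trans (by rw [← hdg]; ring_nf; exact Dvd.intro (d^2) rfl) hgem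
    exact (Nat.Coprime.pow_left 2 hce).dvd_of_dvd_mul_left h1
  -- d² ∣ e
  have hd2e : d ^ 2 ∣ e := by
    have h1 : c * (c * d ^ 2) ∣ c * (e * m₁) := by
      have : (c * d) ^ 2 ∣ e * (c * m₁) := by rw [hdg, hm1e]; exact hgem
      calc c * (c * d ^ 2) = (c * d) ^ 2 := by ring
        _ ∣ e * (c * m₁) := this
        _ = c * (e * m₁) := by ring
    have h2 : c * d ^ 2 ∣ e * m₁ := (Nat.mul_dvd_mul_iff_left hcpos).mp h1
    have h3 : d ^ 2 ∣ e * m₁ := dvd_trans ⟨c, by ring⟩ h2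
    exact (Nat.Coprime.pow_left 2 hdm1).dvd_of_dvd_mul_right h3
  set e' : ℕ := e / d ^ 2 with he'
  have hed : e' * d ^ 2 = e := Nat.div_mul_cancel hd2e
  have he'pos : 0 < e' := by
    rcases Nat.eq_zero_or_pos e' with h0 | h0
    · rw [h0] at hed; omega
    · exact h0
  set m₂ : ℕ := m / c ^ 2 with hm2
  have hm2e : c ^ 2 * m₂ = m := Nat.mul_div_cancel' hc2m
  refine ⟨e', c, d, he'pos, hcpos, hdpos, hed.symm, by rw [hg, ← hdg]; ring, ?_⟩
  have hM' : M = h' ^ 2 * (e' * m₂) := by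
    rw [hg, ← hdg, hMeq, ← hed, ← hm2e]; ring
  have : M / h' ^ 2 = e' * m₂ := by
    rw [hM']; exact Nat.mul_div_cancel_left _ (pow_pos hh' 2)
  rw [this]; exact Dvd.intro m₂ rfl

lemma det_eq (M h e m : ℕ) (hh : 0 < h) (he : 0 < e) (hMeq : M = h ^ 2 * (e * m))
    (P Q R S : ℝ)
    (hdet : ((Real.sqrt e)⁻¹ • !![(e : ℝ) * P, Q / h; (M : ℝ) * R / h, (e : ℝ) * S]).det = 1) :
    (e : ℝ) * (P * S) - (m : ℝ) * (Q * R) = 1 := by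
  rw [Matrix.det_smul, Matrix.det_fin_two_of] at hdet
  have hs : Real.sqrt e ^ 2 = e := Real.sq_sqrt (by positivity)
  have hs0 : Real.sqrt e ≠ 0 := by
    have : (0:ℝ) < Real.sqrt e := Real.sqrt_pos.mpr (by exact_mod_cast he)
    linarith
  have he0 : (e : ℝ) ≠ 0 := by exact_mod_cast he.ne'
  have hh0 : (h : ℝ) ≠ 0 := by exact_mod_cast hh.ne'
  have hMr : (M : ℝ) = (h:ℝ) ^ 2 * ((e:ℝ) * m) := by exact_mod_cast congrArg (Nat.cast (R := ℝ)) hMeq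
  simp only [Fintype.card_fin] at hdet
  rw [hMr] at hdet
  field_simp at hdet
  have key : (e:ℝ) * (h:ℝ)^2 * ((e:ℝ) * (P * S) - (m:ℝ) * (Q * R)) = (e:ℝ) * (h:ℝ)^2 * 1 := by
    linear_combination (h:ℝ)^2 * hdet + (h:ℝ)^2 * hs
  exact mul_left_cancel₀ (by positivity) key

lemma mat_eq (M h h' e e' c d : ℕ) (hh : 0 < h) (he' : 0 < e') (hc : 0 < c) (hd : 0 < d)
    (hed : e = e' * d ^ 2) (hh'e : h' = c * d * h) (P Q R S : ℝ) :
    (Real.sqrt e)⁻¹ • !![(e : ℝ) * P, Q / h; (M : ℝ) * R / h, (e : ℝ) * S]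
      = (Real.sqrt e')⁻¹ •
        !![(e' : ℝ) * (P * d), (Q * c) / h'; (M : ℝ) * (R * c) / h', (e' : ℝ) * (S * d)] := by
  have hsq : Real.sqrt e = Real.sqrt e' * d := by
    rw [hed]
    push_cast
    rw [Real.sqrt_mul (by positivity), Real.sqrt_sq (by positivity)]
  have hs0 : Real.sqrt e' ≠ 0 := by
    have : (0:ℝ) < Real.sqrt e' := Real.sqrt_pos.mpr (by exact_mod_cast he')
    linarith
  have hd0 : (d : ℝ) ≠ 0 := by exact_mod_cast hd.ne'
  have hc0 : (c : ℝ) ≠ 0 := by exact_mod_cast hc.ne'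
  have hh0 : (h : ℝ) ≠ 0 := by exact_mod_cast hh.ne'
  have her : (e : ℝ) = (e' : ℝ) * (d : ℝ) ^ 2 := by exact_mod_cast congrArg (Nat.cast (R := ℝ)) hed
  have hhr : (h' : ℝ) = (c : ℝ) * d * h := by exact_mod_cast congrArg (Nat.cast (R := ℝ)) hh'e
  ext i j
  fin_cases i <;> fin_cases j <;>
    simp [Matrix.smul_apply, hsq, her, hhr] <;> field_simp <;> ring
lemma inZM_norm {M : ℕ} {x : ℚ} (hx : inZM M x) :
    ∃ a b : ℤ, b ≠ 0 ∧ Int.gcd b M = 1 ∧ x = a / b := by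
  obtain ⟨a, b, hb, hx⟩ := hx
  rcases eq_or_ne b 0 with h0 | h0
  · exact ⟨0, 1, one_ne_zero, by simp, by simp [hx, h0]⟩
  · exact ⟨a, b, h0, hb, hx⟩

lemma inZM_mul {M : ℕ} {x y : ℚ} (hx : inZM M x) (hy : inZM M y) : inZM M (x * y) := by
  obtain ⟨a, b, hb, hx⟩ := hx
  obtain ⟨c, d, hd, hy⟩ := hy
  refine ⟨a * c, b * d, ?_, by rw [hx, hy]; push_cast; rw [div_mul_div_comm]⟩
  have hb' : Nat.Coprime b.natAbs M := by
    rwa [Int.gcd, Int.natAbs_natCast] at hb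
  have hd' : Nat.Coprime d.natAbs M := by
    rwa [Int.gcd, Int.natAbs_natCast] at hd
  rw [Int.gcd, Int.natAbs_natCast, Int.natAbs_mul]
  exact Nat.Coprime.mul hb' hd'

lemma inZM_intCast (M : ℕ) (n : ℤ) : inZM M (n : ℚ) := ⟨n, 1, by simp, by simp⟩

lemma cop_int (e m : ℕ) (p q r s : ℤ)
    (h : (e : ℤ) * (p * s) - (m : ℤ) * (q * r) = 1) : Nat.Coprime e m := by
  have hc : IsCoprime (e : ℤ) (m : ℤ) := ⟨p * s, -(q * r), by linarith⟩
  have := Int.isCoprime_iff_gcd_eq_one.mp hc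
  rwa [Int.gcd_natCast_natCast] at this

lemma cop_rat (M e m : ℕ) (hM : 0 < M) (heM : e ∣ M) (hmM : m ∣ M) (x y : ℚ)
    (hx : inZM M x) (hy : inZM M y) (h : (e : ℚ) * x - (m : ℚ) * y = 1) :
    Nat.Coprime e m := by
  obtain ⟨a, b, hb0, hbg, hxe⟩ := inZM_norm hx
  obtain ⟨c, d, hd0, hdg, hye⟩ := inZM_norm hy
  rw [hxe, hye] at h
  have hz : (e : ℤ) * a * d - (m : ℤ) * c * b = b * d := by
    have hb0' : (b : ℚ) ≠ 0 := Int.cast_ne_zero.mpr hb0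
    have hd0' : (d : ℚ) ≠ 0 := Int.cast_ne_zero.mpr hd0
    field_simp at h
    have h' : (e : ℤ) * a * d - b * (m:ℤ) * c = b * d := by exact_mod_cast h
    linarith
  set t : ℕ := Nat.gcd e m with ht
  have htM : t ∣ M := dvd_trans (Nat.gcd_dvd_left e m) heM
  have htbd : (t : ℤ) ∣ b * d := by
    rw [← hz]
    have h1 : (t : ℤ) ∣ (e : ℤ) := Int.natCast_dvd_natCast.mpr (Nat.gcd_dvd_left e m)
    have h2 : (t : ℤ) ∣ (m : ℤ) := Int.natCast_dvd_natCast.mpr (Nat.gcd_dvd_right e m)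
    exact dvd_sub (Dvd.dvd.mul_right (h1.mul_right a) d) (Dvd.dvd.mul_right (h2.mul_right c) b)
  have htbd' : t ∣ (b * d).natAbs := by
    rwa [Int.natCast_dvd] at htbd
  have hcop : Nat.Coprime ((b * d).natAbs) M := by
    rw [Int.natAbs_mul]
    have hb' : Nat.Coprime b.natAbs M := by rwa [Int.gcd, Int.natAbs_natCast] at hbg
    have hd' : Nat.Coprime d.natAbs M := by rwa [Int.gcd, Int.natAbs_natCast] at hdg
    exact Nat.Coprime.mul hb' hd'
  exact Nat.eq_one_of_dvd_one (hcop ▸ Nat.dvd_gcd htbd' htM)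

/-- If `h ∣ h'` (with `h² ∣ M` and `h'² ∣ M`), then `Γ₀^{*,h}(M) ⊆ Γ₀^{*,h'}(M)` and
`G₀^{*,h}(M) ⊆ G₀^{*,h'}(M)`. -/
theorem GammaStar_subset_of_dvd (M h h' : ℕ) (hM : 0 < M) (hh : 0 < h) (hh' : 0 < h')
    (hhM : h ^ 2 ∣ M) (hh'M : h' ^ 2 ∣ M) (hdvd : h ∣ h') :
    GammaStar M h ⊆ GammaStar M h' ∧ GStar M h ⊆ GStar M h' := by
  constructor
  · rintro W ⟨hdet, e, p, q, r, s, he, heM, hW⟩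
    set m : ℕ := (M / h ^ 2) / e with hm
    have hem : e * m = M / h ^ 2 := Nat.mul_div_cancel' heM
    have hMeq : M = h ^ 2 * (e * m) := by
      rw [hem]; exact (Nat.mul_div_cancel' hhM).symm
    have hd1 : ((Real.sqrt e)⁻¹ •
        !![(e : ℝ) * p, (q : ℝ) / h; (M : ℝ) * r / h, (e : ℝ) * s]).det = 1 := by
      rw [← hW]; exact hdet
    have hkey := det_eq M h e m hh he hMeq (p : ℝ) (q : ℝ) (r : ℝ) (s : ℝ) hd1
    have hkeyZ : (e : ℤ) * (p * s) - (m : ℤ) * (q * r) = 1 := by exact_mod_cast hkey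
    have hcop : Nat.Coprime e m := cop_int e m p q r s hkeyZ
    obtain ⟨e', c, d, he'p, hcp, hdp, hed, hh'e, he'M⟩ :=
      master M h h' e hM hh hh' hhM hh'M hdvd he heM hcop
    refine ⟨hdet, e', p * d, q * c, r * c, s * d, he'p, he'M, ?_⟩
    rw [hW, mat_eq M h h' e e' c d hh he'p hcp hdp hed hh'e (p : ℝ) (q : ℝ) (r : ℝ) (s : ℝ)]
    push_cast
    ring_nf
  · rintro W ⟨hdet, e, p, q, r, s, he, heM, hp, hq, hr, hs, hW⟩
    set m : ℕ := (M / h ^ 2) / e with hm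
    have hem : e * m = M / h ^ 2 := Nat.mul_div_cancel' heM
    have hMeq : M = h ^ 2 * (e * m) := by
      rw [hem]; exact (Nat.mul_div_cancel' hhM).symm
    have hd1 : ((Real.sqrt e)⁻¹ •
        !![(e : ℝ) * (p : ℝ), (q : ℝ) / h; (M : ℝ) * r / h, (e : ℝ) * s]).det = 1 := by
      rw [← hW]; exact hdet
    have hkey := det_eq M h e m hh he hMeq (p : ℝ) (q : ℝ) (r : ℝ) (s : ℝ) hd1
    have hkeyQ : (e : ℚ) * (p * s) - (m : ℚ) * (q * r) = 1 := by exact_mod_cast hkey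
    have heMd : e ∣ M := dvd_trans heM (Nat.div_dvd_of_dvd hhM)
    have hmMd : m ∣ M :=
      dvd_trans (Dvd.intro_left e hem) (Nat.div_dvd_of_dvd hhM)
    have hcop : Nat.Coprime e m :=
      cop_rat M e m hM heMd hmMd (p * s) (q * r) (inZM_mul hp hs) (inZM_mul hq hr) hkeyQ
    obtain ⟨e', c, d, he'p, hcp, hdp, hed, hh'e, he'M⟩ :=
      master M h h' e hM hh hh' hhM hh'M hdvd he heM hcop
    refine ⟨hdet, e', p * d, q * c, r * c, s * d, he'p, he'M,
      inZM_mul hp (inZM_intCast M d), inZM_mul hq (inZM_intCast M c),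
      inZM_mul hr (inZM_intCast M c), inZM_mul hs (inZM_intCast M d), ?_⟩
    rw [hW, mat_eq M h h' e e' c d hh he'p hcp hdp hed hh'e (p : ℝ) (q : ℝ) (r : ℝ) (s : ℝ)]
    push_cast
    ring_nf
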